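/- Consider the following OSD instance with deadline penalties. The metric space is the star with center c and points p_0, p_1, …, p_{n−1} (n ≥ 2), where d(p_0,c) = W for some W ≥ 1, d(p_i,c) = 1 for 1 ≤ i ≤ n−1, and distances between points are sums along the star. The server starts at p_0. For each 1 ≤ i ≤ n−1 there is a request at p_i arriving at time 0 with penalty function f_i(t) = 0 for t ≤ i and f_i(t) = ∞ for t > i; for each j = 0,1,…,n−1 there is a request at p_0 arriving at time j with penalty function f(t) = 0 for t = 0 and f(t) = ∞ for t > 0 (penalty functions take values in [0,∞]). Then every schedule of finite total cost that, for each 1 ≤ i ≤ n−1, serves the request at p_i at a time greater than or equal to i (i.e., never serves it strictly before its deadline) has movement cost at least (n−1)·(W+1). -/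

import Mathlib

/-- A request in the online service with delay (OSD) problem: a point of the
metric space, an arrival time, and a nondecreasing, nonnegative delay penalty
function (given on `ℝ`, extended below `0`; only nonnegative arguments are
ever used). -/
structure OSDRequest (M : Type) where
  point : M
  arrival : ℝ
  arrival_nonneg : 0 ≤ arrival
  penalty : ℝ → ℝ
  penalty_nonneg : ∀ t, 0 ≤ penalty t
  penalty_mono : Monotone penalty

/-- A schedule is a finite sequence of timestamped moves with nondecreasing,
nonnegative timestamps. -/
def ValidSchedule {M : Type} (S : List (ℝ × M)) : Prop :=
  S.Chain' (fun a b => a.1 ≤ b.1) ∧ ∀ mv ∈ S, 0 ≤ mv.1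

/-- A schedule serves a request if some move is at the request's point, at a
time no earlier than its arrival. -/
def ServesReq {M : Type} (S : List (ℝ × M)) (r : OSDRequest M) : Prop :=
  ∃ mv ∈ S, r.arrival ≤ mv.1 ∧ mv.2 = r.point

/-- The service time of a request: the smallest timestamp of a serving move. -/
noncomputable def serveTime {M : Type} (S : List (ℝ × M)) (r : OSDRequest M) : ℝ :=
  sInf {t : ℝ | ∃ mv ∈ S, mv.1 = t ∧ r.arrival ≤ t ∧ mv.2 = r.point}

/-- Movement cost of a schedule, starting from a given position, w.r.t. a
distance function `d`. -/
noncomputable def moveCost {M : Type} (d : M → M → ℝ) : M → List (ℝ × M) → ℝ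
  | _, [] => 0
  | q, mv :: rest => d q mv.2 + moveCost d mv.2 rest

/-- Total cost of a schedule: movement cost plus total delay penalty. -/
noncomputable def schedCost {M : Type} (d : M → M → ℝ) (q0 : M)
    (I : Finset (OSDRequest M)) (S : List (ℝ × M)) : ℝ :=
  moveCost d q0 S + ∑ r ∈ I, r.penalty (serveTime S r - r.arrival)

/-- A schedule for an instance: valid and serving every request. -/
def IsSchedule {M : Type} (I : Finset (OSDRequest M)) (S : List (ℝ × M)) : Prop :=
  ValidSchedule S ∧ ∀ r ∈ I, ServesReq S r

/-- The optimal (offline) cost of an instance. -/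
noncomputable def OPT {M : Type} (d : M → M → ℝ) (q0 : M)
    (I : Finset (OSDRequest M)) : ℝ :=
  sInf {c : ℝ | ∃ S : List (ℝ × M), IsSchedule I S ∧ schedCost d q0 I S = c}

/-- All requests of the instance arrive at allowed points. -/
def OKInst {M : Type} (P : M → Prop) (I : Finset (OSDRequest M)) : Prop :=
  ∀ r ∈ I, P r.point
open scoped ENNReal

/-- An OSD request whose delay penalty takes values in `[0,∞]`. -/
structure OSDRequestE (M : Type) where
  point : M
  arrival : ℝ
  arrival_nonneg : 0 ≤ arrival
  penalty : ℝ → ℝ≥0∞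
  penalty_mono : Monotone penalty

def ServesReqE {M : Type} (S : List (ℝ × M)) (r : OSDRequestE M) : Prop :=
  ∃ mv ∈ S, r.arrival ≤ mv.1 ∧ mv.2 = r.point

noncomputable def serveTimeE {M : Type} (S : List (ℝ × M)) (r : OSDRequestE M) : ℝ :=
  sInf {t : ℝ | ∃ mv ∈ S, mv.1 = t ∧ r.arrival ≤ t ∧ mv.2 = r.point}
/-- The star metric on center `none` and points `some i` (`i : Fin n`), where
`p 0` is at distance `W` from the center and every other point at distance `1`. -/
noncomputable def starVtr (n : ℕ) (W : ℝ) : Option (Fin n) → ℝ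
  | none => 0
  | some i => if (i : ℕ) = 0 then W else 1

noncomputable def starDist (n : ℕ) (W : ℝ) (x y : Option (Fin n)) : ℝ :=
  if x = y then 0 else starVtr n W x + starVtr n W y

/-- The deadline instance of Fig. 2: for each `1 ≤ i ≤ n-1`, a request at `p i`
arriving at time `0` with deadline `i` (penalty `0` up to delay `i`, `∞`
afterwards); at `p 0`, a request arriving at each time `j = 0,…,n-1` that must
be served immediately (penalty `0` at delay `0`, `∞` afterwards). -/
def DeadlineInst (n : ℕ) (r : OSDRequestE (Option (Fin n))) : Prop :=
  (∃ i : Fin n, 1 ≤ (i : ℕ) ∧ r.point = some i ∧ r.arrival = 0 ∧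
      r.penalty = fun t => if t ≤ ((i : ℕ) : ℝ) then 0 else ⊤) ∨
  ((∃ i0 : Fin n, (i0 : ℕ) = 0 ∧ r.point = some i0) ∧
      (∃ j : Fin n, r.arrival = ((j : ℕ) : ℝ)) ∧
      r.penalty = fun t => if t ≤ 0 then 0 else ⊤)



lemma aux_indMono (c : ℝ) : Monotone (fun t : ℝ => if t ≤ c then (0:ℝ≥0∞) else ⊤) := by
  intro a b hab
  by_cases hb : b ≤ c
  · simp [hb, le_trans hab hb]
  · simp only [hb, if_false]
    exact le_top

lemma aux_starVtr_nonneg {n : ℕ} {W : ℝ} (hW : 0 ≤ W) (x : Option (Fin n)) :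
    0 ≤ starVtr n W x := by
  cases x with
  | none => simp [starVtr]
  | some i => simp only [starVtr]; split_ifs <;> linarith

lemma aux_starDist_nonneg {n : ℕ} {W : ℝ} (hW : 0 ≤ W) (x y : Option (Fin n)) :
    0 ≤ starDist n W x y := by
  have hx := aux_starVtr_nonneg (n := n) hW x
  have hy := aux_starVtr_nonneg (n := n) hW y
  unfold starDist; split_ifs <;> linarith

lemma aux_starDist_triangle {n : ℕ} {W : ℝ} (hW : 0 ≤ W) (x y z : Option (Fin n)) :
    starDist n W x z ≤ starDist n W x y + starDist n W y z := by
  have hx := aux_starVtr_nonneg (n := n) hW x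
  have hy := aux_starVtr_nonneg (n := n) hW y
  have hz := aux_starVtr_nonneg (n := n) hW z
  unfold starDist
  split_ifs <;> subst_vars <;> first | linarith | simp_all

lemma aux_moveCost_eq_sum {M : Type} (d : M → M → ℝ) (z : M) :
    ∀ (S : List (ℝ × M)) (q : M),
      moveCost d q S =
        ∑ j ∈ Finset.range S.length,
          d ((q :: S.map Prod.snd).getD j z) ((q :: S.map Prod.snd).getD (j+1) z) := by
  intro S
  induction S with
  | nil => intro q; simp [moveCost]
  | cons mv rest ih =>
    intro q
    rw [show moveCost d q (mv :: rest) = d q mv.2 + moveCost d mv.2 rest from rfl, ih mv.2]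
    rw [List.length_cons, Finset.sum_range_succ']
    simp only [List.map_cons, List.getD_cons_succ, List.getD_cons_zero]
    ring

lemma aux_chain_lb {n : ℕ} {W : ℝ} (hW : 0 ≤ W) (P : List (Option (Fin n)))
    (a b : ℕ) (hab : a ≤ b) :
    starDist n W (P.getD a none) (P.getD b none) ≤
      ∑ j ∈ Finset.Ico a b, starDist n W (P.getD j none) (P.getD (j+1) none) := by
  induction b, hab using Nat.le_induction with
  | base => simp [starDist]
  | succ b hab ih =>
    rw [Finset.sum_Ico_succ_top hab]
    calc starDist n W (P.getD a none) (P.getD (b+1) none)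
        ≤ starDist n W (P.getD a none) (P.getD b none) +
            starDist n W (P.getD b none) (P.getD (b+1) none) :=
          aux_starDist_triangle hW _ _ _
      _ ≤ _ := by linarith

lemma aux_ts_mono {M : Type} {S : List (ℝ × M)} (h : S.Chain' (fun a b => a.1 ≤ b.1))
    (z : ℝ × M) (p q : ℕ) (hpq : p ≤ q) (hq : q < S.length) :
    (S.getD p z).1 ≤ (S.getD q z).1 := by
  haveI : IsTrans (ℝ × M) (fun a b => a.1 ≤ b.1) := ⟨fun a b c hab hbc => le_trans hab hbc⟩
  have hpw : List.Pairwise (fun a b => a.1 ≤ b.1) S := List.isChain_iff_pairwise.mp h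
  rcases eq_or_lt_of_le hpq with rfl | hlt
  · exact le_refl _
  · have hp : p < S.length := lt_trans hlt hq
    rw [List.getD_eq_getElem _ _ hp, List.getD_eq_getElem _ _ hq]
    exact List.pairwise_iff_getElem.mp hpw p q hp hq hlt

lemma aux_serve_attained {M : Type} (S : List (ℝ × M)) (r : OSDRequestE M)
    (h : ServesReqE S r) :
    ∃ mv ∈ S, mv.1 = serveTimeE S r ∧ mv.2 = r.point ∧ r.arrival ≤ serveTimeE S r := by
  have hne : {t : ℝ | ∃ mv ∈ S, mv.1 = t ∧ r.arrival ≤ t ∧ mv.2 = r.point}.Nonempty := by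
    obtain ⟨mv, hmv, h1, h2⟩ := h; exact ⟨mv.1, mv, hmv, rfl, h1, h2⟩
  have hfin : {t : ℝ | ∃ mv ∈ S, mv.1 = t ∧ r.arrival ≤ t ∧ mv.2 = r.point}.Finite := by
    apply Set.Finite.subset (Set.Finite.image Prod.fst S.finite_toSet)
    rintro t ⟨mv, hmv, rfl, _, _⟩; exact ⟨mv, hmv, rfl⟩
  have hmem := hne.csInf_mem hfin
  obtain ⟨mv, hmv, h1, h2, h3⟩ := hmem
  exact ⟨mv, hmv, h1, h3, h2⟩

lemma aux_starDist_comm {n : ℕ} {W : ℝ} (x y : Option (Fin n)) :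
    starDist n W x y = starDist n W y x := by
  unfold starDist
  rcases eq_or_ne x y with rfl | h
  · simp
  · rw [if_neg h, if_neg (Ne.symm h), add_comm]

/-- Every finite-cost schedule for the deadline instance that
serves the request at `p i` no earlier than time `i` (its deadline), for each
`1 ≤ i ≤ n-1`, has movement cost at least `(n-1)·(W+1)`. -/
theorem deadline_star_lazy_lower_bound (n : ℕ) (W : ℝ) (hn : 2 ≤ n) (hW : 1 ≤ W)
    (I : Finset (OSDRequestE (Option (Fin n))))
    (hI : ∀ r, r ∈ I ↔ DeadlineInst n r)
    (i0 : Fin n) (hi0 : (i0 : ℕ) = 0)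
    (S : List (ℝ × Option (Fin n)))
    (hvalid : ValidSchedule S) (hserve : ∀ r ∈ I, ServesReqE S r)
    (hfin : (∑ r ∈ I, r.penalty (serveTimeE S r - r.arrival)) ≠ ⊤)
    (hlazy : ∀ r ∈ I, ∀ i : Fin n, 1 ≤ (i : ℕ) → r.point = some i →
      ((i : ℕ) : ℝ) ≤ serveTimeE S r) :
    ((n : ℝ) - 1) * (W + 1) ≤ moveCost (starDist n W) (some i0) S := by
  classical
  have hW0 : (0:ℝ) ≤ W := by linarith
  set d := starDist n W with hd
  set z : ℝ × Option (Fin n) := (0, none) with hz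
  set L : ℕ := S.length with hL
  set P : List (Option (Fin n)) := some i0 :: S.map Prod.snd with hP
  have hPsucc : ∀ j : ℕ, P.getD (j+1) none = (S.getD j z).2 := by
    intro j
    rw [hP, List.getD_cons_succ]
    have : (none : Option (Fin n)) = Prod.snd z := rfl
    rw [this, List.getD_map]
  set s : Finset ℕ := Finset.Icc 1 (n-1) with hs
  -- For each i, there are moves at time i at p_i and at p_0.
  have H : ∀ i ∈ s, ∃ km : ℕ × ℕ, km.1 < L ∧ km.2 < L ∧
      (S.getD km.1 z).1 = (i:ℝ) ∧ (S.getD km.2 z).1 = (i:ℝ) ∧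
      d (S.getD km.1 z).2 (S.getD km.2 z).2 = W + 1 := by
    intro i hi
    rw [hs, Finset.mem_Icc] at hi
    have hlt : i < n := by omega
    set fi : Fin n := ⟨i, hlt⟩ with hfi
    -- request at p_i with deadline i
    set r : OSDRequestE (Option (Fin n)) :=
      ⟨some fi, 0, le_refl 0, fun t => if t ≤ (i:ℝ) then 0 else ⊤, aux_indMono _⟩ with hr
    have hrI : r ∈ I := by
      rw [hI]
      exact Or.inl ⟨fi, by simpa [hfi] using hi.1, rfl, rfl, rfl⟩
    have hst_ge : (i:ℝ) ≤ serveTimeE S r := by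
      have := hlazy r hrI fi (by simpa [hfi] using hi.1) rfl
      simpa [hfi] using this
    have hterm : r.penalty (serveTimeE S r - r.arrival) ≠ ⊤ := ENNReal.sum_ne_top.mp hfin r hrI
    have hst_le : serveTimeE S r ≤ (i:ℝ) := by
      by_contra hc
      push_neg at hc
      apply hterm
      show (if serveTimeE S r - 0 ≤ (i:ℝ) then (0:ℝ≥0∞) else ⊤) = ⊤
      rw [if_neg (by linarith)]
    have hst : serveTimeE S r = (i:ℝ) := le_antisymm hst_le hst_ge
    obtain ⟨mv, hmvS, hmv1, hmv2, _⟩ := aux_serve_attained S r (hserve r hrI)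
    -- request at p_0 arriving at time i
    set w : OSDRequestE (Option (Fin n)) :=
      ⟨some i0, (i:ℝ), by positivity, fun t => if t ≤ 0 then 0 else ⊤, aux_indMono _⟩ with hw
    have hwI : w ∈ I := by
      rw [hI]
      exact Or.inr ⟨⟨i0, hi0, rfl⟩, ⟨fi, rfl⟩, rfl⟩
    have hwterm : w.penalty (serveTimeE S w - w.arrival) ≠ ⊤ := ENNReal.sum_ne_top.mp hfin w hwI
    obtain ⟨mw, hmwS, hmw1, hmw2, hwge⟩ := aux_serve_attained S w (hserve w hwI)
    have hwle : serveTimeE S w ≤ (i:ℝ) := by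
      by_contra hc
      push_neg at hc
      apply hwterm
      show (if serveTimeE S w - (i:ℝ) ≤ 0 then (0:ℝ≥0∞) else ⊤) = ⊤
      rw [if_neg (by linarith)]
    have hwst : serveTimeE S w = (i:ℝ) := le_antisymm hwle hwge
    obtain ⟨k, hk, hkeq⟩ := List.mem_iff_getElem.mp hmvS
    obtain ⟨m, hm, hmeq⟩ := List.mem_iff_getElem.mp hmwS
    refine ⟨(k, m), hk, hm, ?_, ?_, ?_⟩
    · rw [List.getD_eq_getElem _ _ hk, hkeq, hmv1, hst]
    · rw [List.getD_eq_getElem _ _ hm, hmeq, hmw1, hwst]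
    · rw [List.getD_eq_getElem _ _ hk, List.getD_eq_getElem _ _ hm, hkeq, hmeq, hmv2, hmw2]
      show starDist n W (some fi) (some i0) = W + 1
      have hne : some fi ≠ some i0 := by
        simp only [ne_eq, Option.some.injEq, Fin.ext_iff, hfi, hi0]
        omega
      have h1 : ¬ ((fi : Fin n) : ℕ) = 0 := by
        rw [hfi]
        simpa using (by omega : i ≠ 0)
      have e1 : starVtr n W (some fi) = if ((fi : Fin n) : ℕ) = 0 then W else 1 := rfl
      have e2 : starVtr n W (some i0) = if ((i0 : Fin n) : ℕ) = 0 then W else 1 := rfl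
      unfold starDist
      rw [if_neg hne, e1, e2, if_neg h1, if_pos hi0]
      ring
  choose km hkL hmL htk htm hdkm using H
  set A : ∀ i ∈ s, ℕ := fun i h => min (km i h).1 (km i h).2 + 1 with hA
  set B : ∀ i ∈ s, ℕ := fun i h => max (km i h).1 (km i h).2 + 1 with hB
  set T : ℕ → Finset ℕ := fun i =>
    if h : i ∈ s then Finset.Ico (A i h) (B i h) else ∅ with hT
  -- times of the endpoints
  have hendk : ∀ i (h : i ∈ s), (S.getD (min (km i h).1 (km i h).2) z).1 = (i:ℝ) := by
    intro i h
    rcases min_choice (km i h).1 (km i h).2 with he | he <;> rw [he]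
    · exact htk i h
    · exact htm i h
  have hendm : ∀ i (h : i ∈ s), (S.getD (max (km i h).1 (km i h).2) z).1 = (i:ℝ) := by
    intro i h
    rcases max_choice (km i h).1 (km i h).2 with he | he <;> rw [he]
    · exact htk i h
    · exact htm i h
  have hmaxL : ∀ i (h : i ∈ s), max (km i h).1 (km i h).2 < L := by
    intro i h; exact max_lt (hkL i h) (hmL i h)
  -- every index inside T i has timestamp i
  have htime : ∀ i (h : i ∈ s), ∀ j ∈ T i, (S.getD (j-1) z).1 = (i:ℝ) := by
    intro i h j hj
    simp only [hT, dif_pos h, Finset.mem_Ico, hA, hB] at hj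
    have h1 : min (km i h).1 (km i h).2 ≤ j - 1 := by omega
    have h2 : j - 1 ≤ max (km i h).1 (km i h).2 := by omega
    have hjL : j - 1 < L := lt_of_le_of_lt h2 (hmaxL i h)
    have hu := aux_ts_mono hvalid.1 z _ _ h1 hjL
    have hv := aux_ts_mono hvalid.1 z _ _ h2 (hmaxL i h)
    rw [hendk i h] at hu
    rw [hendm i h] at hv
    linarith
  -- T's are pairwise disjoint
  have hdisj : (↑s : Set ℕ).PairwiseDisjoint T := by
    intro i hi i' hi' hne
    simp only [Finset.disjoint_left]
    intro j hji hji'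
    have t1 := htime i hi j hji
    have t2 := htime i' hi' j hji'
    rw [t1] at t2
    exact hne (by exact_mod_cast t2)
  -- main chain of inequalities
  have hmc := aux_moveCost_eq_sum (starDist n W) (none : Option (Fin n)) S (some i0)
  rw [hmc]
  have hstep : ∀ j : ℕ, 0 ≤ starDist n W (P.getD j none) (P.getD (j+1) none) := fun j =>
    aux_starDist_nonneg hW0 _ _
  have hsub : s.biUnion T ⊆ Finset.range L := by
    intro j hj
    rw [Finset.mem_biUnion] at hj
    obtain ⟨i, hi, hji⟩ := hj
    rw [hT] at hji
    simp only [dif_pos hi, Finset.mem_Ico, hA, hB] at hji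
    rw [Finset.mem_range]
    have := hmaxL i hi
    omega
  have step1 : ∑ j ∈ s.biUnion T,
      starDist n W (P.getD j none) (P.getD (j+1) none) ≤
      ∑ j ∈ Finset.range L, starDist n W (P.getD j none) (P.getD (j+1) none) :=
    Finset.sum_le_sum_of_subset_of_nonneg hsub (fun j _ _ => hstep j)
  rw [Finset.sum_biUnion hdisj] at step1
  have step2 : ∀ i ∈ s, (W + 1 : ℝ) ≤
      ∑ j ∈ T i, starDist n W (P.getD j none) (P.getD (j+1) none) := by
    intro i hi
    rw [hT]
    simp only [dif_pos hi]
    have hab : A i hi ≤ B i hi := by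
      rw [hA, hB]
      exact Nat.add_le_add_right min_le_max 1
    have hch := aux_chain_lb hW0 P (A i hi) (B i hi) hab
    refine le_trans ?_ hch
    rw [hA, hB, hPsucc, hPsucc]
    rcases le_total (km i hi).1 (km i hi).2 with hle | hle
    · rw [min_eq_left hle, max_eq_right hle]
      exact le_of_eq (hdkm i hi).symm
    · rw [min_eq_right hle, max_eq_left hle, aux_starDist_comm]
      exact le_of_eq (hdkm i hi).symm
  have step3 : ((n:ℝ) - 1) * (W + 1) ≤
      ∑ i ∈ s, ∑ j ∈ T i, starDist n W (P.getD j none) (P.getD (j+1) none) := by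
    have hcard : s.card = n - 1 := by rw [hs, Nat.card_Icc]; omega
    calc ((n:ℝ) - 1) * (W + 1) = s.card * (W + 1) := by
          rw [hcard]
          congr 1
          rw [Nat.cast_sub (by omega), Nat.cast_one]
      _ = s.card • (W + 1) := (nsmul_eq_mul _ _).symm
      _ ≤ _ := Finset.card_nsmul_le_sum s _ _ step2
  linarith [step1, step3]
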